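/- System completion reduction: for X ⊆ {n ∈ ℕ : n > 1} with completion X̂, if nK + ♦_{4X̂} proves a nested sequent Γ, then nK + ♦_{4X} proves Γ. In particular, each rule ♦_{4n} with n ∈ X̂ is admissible in nK + ♦_{4X}. -/

import Mathlib

/-! Formulas of modal logic in negation normal form. -/
inductive Formula : Type
  | pos : ℕ → Formula
  | neg : ℕ → Formula
  | and : Formula → Formula → Formula
  | or : Formula → Formula → Formula
  | box : Formula → Formula
  | dia : Formula → Formula
  deriving DecidableEq

namespace Formula

/-- Negation by de Morgan duality. -/
def negf : Formula → Formula
  | pos p => neg p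
  | neg p => pos p
  | and A B => or A.negf B.negf
  | or A B => and A.negf B.negf
  | box A => dia A.negf
  | dia A => box A.negf

/-- The (modal) degree of a formula. -/
def deg : Formula → ℕ
  | pos _ => 0
  | neg _ => 0
  | and A B => A.deg + B.deg
  | or A B => A.deg + B.deg
  | box A => A.deg + 1
  | dia A => A.deg + 1

/-- Implication `A ⊃ B := Ā ∨ B`. -/
def impl (A B : Formula) : Formula := or A.negf B

def bot : Formula := and (pos 0) (neg 0)

/-- `♦ⁿ A`. -/
def diaIter : ℕ → Formula → Formula
  | 0, A => A
  | n+1, A => dia (diaIter n A)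

end Formula

/-- Nested sequents: finite multisets of formulas and boxed sequents,
represented as list-like trees considered up to permutation (`NSeq.Perm`). -/
inductive NSeq : Type
  | nil : NSeq
  | fcons : Formula → NSeq → NSeq
  | bcons : NSeq → NSeq → NSeq

namespace NSeq

/-- Multiset union of nested sequents. -/
def append : NSeq → NSeq → NSeq
  | nil, Δ => Δ
  | fcons A Γ, Δ => fcons A (Γ.append Δ)
  | bcons B Γ, Δ => bcons B (Γ.append Δ)

/-- Multiset-like equivalence of nested sequents (hereditary permutation). -/
inductive Perm : NSeq → NSeq → Prop
  | nil : Perm nil nil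
  | fcons (A : Formula) {Γ Δ : NSeq} : Perm Γ Δ → Perm (fcons A Γ) (fcons A Δ)
  | bcons {B B' Γ Δ : NSeq} : Perm B B' → Perm Γ Δ → Perm (bcons B Γ) (bcons B' Δ)
  | swapff (A B : Formula) (Γ : NSeq) : Perm (fcons A (fcons B Γ)) (fcons B (fcons A Γ))
  | swapfb (A : Formula) (B Γ : NSeq) : Perm (fcons A (bcons B Γ)) (bcons B (fcons A Γ))
  | swapbf (A : Formula) (B Γ : NSeq) : Perm (bcons B (fcons A Γ)) (fcons A (bcons B Γ))
  | swapbb (B C Γ : NSeq) : Perm (bcons B (bcons C Γ)) (bcons C (bcons B Γ))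
  | trans {Γ Δ Θ : NSeq} : Perm Γ Δ → Perm Δ Θ → Perm Γ Θ

/-- The corresponding formula of a nested sequent. -/
def form : NSeq → Formula
  | nil => Formula.bot
  | fcons A Γ => Formula.or A Γ.form
  | bcons B Γ => Formula.or Γ.form (Formula.box B.form)

end NSeq

/-- Contexts: nested sequents with a single hole. -/
inductive Ctx : Type
  | hole : Ctx
  | fcons : Formula → Ctx → Ctx
  | scons : NSeq → Ctx → Ctx
  | binto : Ctx → NSeq → Ctx

namespace Ctx

/-- Filling the hole of a context with a nested sequent. -/
def fill : Ctx → NSeq → NSeq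
  | hole, Δ => Δ
  | fcons A C, Δ => NSeq.fcons A (C.fill Δ)
  | scons S C, Δ => NSeq.bcons S (C.fill Δ)
  | binto C S, Δ => NSeq.bcons (C.fill Δ) S

/-- The depth of a context. -/
def depth : Ctx → ℕ
  | hole => 0
  | fcons _ C => C.depth
  | scons _ C => C.depth
  | binto C _ => C.depth + 1

end Ctx

/-- `nestBox [Δ₁, …, Δₖ] Θ = [Δ₁, [Δ₂, [ … , [Δₖ, Θ'] … ]]]` where the innermost
box contains `Δₖ` together with the box `[Θ]`; i.e. a chain of `k+1` nested boxes
whose `i`-th box contains `Δᵢ` and whose innermost box is `[Θ]`. -/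
def nestBox : List NSeq → NSeq → NSeq
  | [], Θ => NSeq.bcons Θ NSeq.nil
  | Δ :: rest, Θ => NSeq.bcons (Δ.append (nestBox rest Θ)) NSeq.nil

/-- `iterBox n Δ`: `n` nested boxes around `Δ`. -/
def iterBox : ℕ → NSeq → NSeq
  | 0, Δ => Δ
  | n+1, Δ => NSeq.bcons (iterBox n Δ) NSeq.nil

/-- Proofs in the nested sequent system `nK` extended with the propagation rules
`♦ₖₙ` for `n ∈ Xk`, the propagation rules `♦₄ₙ` for `n ∈ X4`, and the cut rule
restricted to cut formulas whose degree satisfies `ρ`.  The index `h` is an upper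
bound on the height of the proof. -/
inductive Prf (Xk X4 : Set ℕ) (ρ : ℕ → Prop) : ℕ → NSeq → Prop
  | id (Γ : Ctx) (p : ℕ) (h : ℕ) :
      Prf Xk X4 ρ h (Γ.fill (NSeq.fcons (.pos p) (NSeq.fcons (.neg p) NSeq.nil)))
  | orR {h : ℕ} (Γ : Ctx) (A B : Formula) :
      Prf Xk X4 ρ h (Γ.fill (NSeq.fcons A (NSeq.fcons B NSeq.nil))) →
      Prf Xk X4 ρ (h+1) (Γ.fill (NSeq.fcons (.or A B) NSeq.nil))
  | andR {h : ℕ} (Γ : Ctx) (A B : Formula) :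
      Prf Xk X4 ρ h (Γ.fill (NSeq.fcons A NSeq.nil)) →
      Prf Xk X4 ρ h (Γ.fill (NSeq.fcons B NSeq.nil)) →
      Prf Xk X4 ρ (h+1) (Γ.fill (NSeq.fcons (.and A B) NSeq.nil))
  | boxR {h : ℕ} (Γ : Ctx) (A : Formula) :
      Prf Xk X4 ρ h (Γ.fill (NSeq.bcons (NSeq.fcons A NSeq.nil) NSeq.nil)) →
      Prf Xk X4 ρ (h+1) (Γ.fill (NSeq.fcons (.box A) NSeq.nil))
  | diaR {h : ℕ} (Γ : Ctx) (A : Formula) (Δ : NSeq) :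
      Prf Xk X4 ρ h (Γ.fill (NSeq.fcons (.dia A) (NSeq.bcons (NSeq.fcons A Δ) NSeq.nil))) →
      Prf Xk X4 ρ (h+1) (Γ.fill (NSeq.fcons (.dia A) (NSeq.bcons Δ NSeq.nil)))
  | propk {h : ℕ} (Γ : Ctx) (A : Formula) (Δs : List NSeq) (Δn : NSeq)
      (hn : Δs.length + 1 ∈ Xk) :
      Prf Xk X4 ρ h (Γ.fill (NSeq.fcons (.dia A) (nestBox Δs (NSeq.fcons A Δn)))) →
      Prf Xk X4 ρ (h+1) (Γ.fill (NSeq.fcons (.dia A) (nestBox Δs Δn)))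
  | prop4 {h : ℕ} (Γ : Ctx) (A : Formula) (Δs : List NSeq) (Δl : NSeq)
      (hn : Δs.length + 2 ∈ X4) :
      Prf Xk X4 ρ h (Γ.fill (NSeq.fcons (.dia A) (nestBox Δs (NSeq.fcons (.dia A) Δl)))) →
      Prf Xk X4 ρ (h+1) (Γ.fill (NSeq.fcons (.dia A) (nestBox Δs Δl)))
  | cut {h : ℕ} (Γ : Ctx) (A : Formula) (hA : ρ A.deg) :
      Prf Xk X4 ρ h (Γ.fill (NSeq.fcons A NSeq.nil)) →
      Prf Xk X4 ρ h (Γ.fill (NSeq.fcons A.negf NSeq.nil)) →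
      Prf Xk X4 ρ (h+1) (Γ.fill NSeq.nil)
  | exch {h : ℕ} {Γ Δ : NSeq} : NSeq.Perm Γ Δ → Prf Xk X4 ρ h Γ → Prf Xk X4 ρ h Δ

/-- No cut formula allowed: the cut-free system. -/
def cutFree : ℕ → Prop := fun _ => False

/-- Unrestricted cut. -/
def cutAll : ℕ → Prop := fun _ => True

/-- Provability (some proof of some height). -/
def Provable (Xk X4 : Set ℕ) (ρ : ℕ → Prop) (Γ : NSeq) : Prop := ∃ h, Prf Xk X4 ρ h Γ

/-- Hilbert-style provability in `K + 4^X`: classical propositional logic,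
axiom k, modus ponens, necessitation, and quasi-transitivity `♦ⁿA ⊃ ♦A` for `n ∈ X`. -/
inductive KProv (X : Set ℕ) : Formula → Prop
  | ax1 (A B : Formula) : KProv X (A.impl (B.impl A))
  | ax2 (A B C : Formula) : KProv X ((A.impl B).impl ((A.impl (B.impl C)).impl (A.impl C)))
  | andI (A B : Formula) : KProv X (A.impl (B.impl (A.and B)))
  | andE1 (A B : Formula) : KProv X ((A.and B).impl A)
  | andE2 (A B : Formula) : KProv X ((A.and B).impl B)
  | orI1 (A B : Formula) : KProv X (A.impl (A.or B))
  | orI2 (A B : Formula) : KProv X (B.impl (A.or B))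
  | orE (A B C : Formula) : KProv X ((A.impl C).impl ((B.impl C).impl ((A.or B).impl C)))
  | negI (A B : Formula) : KProv X ((A.impl B).impl ((A.impl B.negf).impl A.negf))
  | negE (A : Formula) : KProv X (A.negf.negf.impl A)
  | axK (A B : Formula) :
      KProv X ((Formula.box (A.impl B)).impl ((Formula.box A).impl (Formula.box B)))
  | mp {A B : Formula} : KProv X (A.impl B) → KProv X A → KProv X B
  | nec {A : Formula} : KProv X A → KProv X (Formula.box A)
  | path {n : ℕ} (hn : n ∈ X) (A : Formula) :
      KProv X ((Formula.diaIter n A).impl (Formula.dia A))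

/-- The approximations `X_p` of the completion of `X`. -/
def compStep (X : Set ℕ) : ℕ → Set ℕ
  | 0 => X
  | p+1 => compStep X p ∪ {k | ∃ m n, m ∈ compStep X p ∧ n ∈ compStep X p ∧ k = m + n - 1}

/-- The completion `X̂` of `X`. -/
def completion (X : Set ℕ) : Set ℕ := ⋃ p, compStep X p

/-! ### Auxiliary development -/

namespace NSeq

theorem append_nil : ∀ Γ : NSeq, Γ.append nil = Γ
  | nil => rfl
  | fcons A Γ => by rw [append, append_nil Γ]
  | bcons B Γ => by rw [append, append_nil Γ]

theorem append_assoc : ∀ Γ Δ Θ : NSeq, (Γ.append Δ).append Θ = Γ.append (Δ.append Θ)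
  | nil, _, _ => rfl
  | fcons A Γ, Δ, Θ => by rw [append, append, append, append_assoc Γ]
  | bcons B Γ, Δ, Θ => by rw [append, append, append, append_assoc Γ]

theorem perm_refl : ∀ Γ : NSeq, Perm Γ Γ
  | .nil => .nil
  | .fcons A Γ => .fcons A (perm_refl Γ)
  | .bcons B Γ => .bcons (perm_refl B) (perm_refl Γ)

theorem Perm.symm {Γ Δ : NSeq} (h : Perm Γ Δ) : Perm Δ Γ := by
  induction h with
  | nil => exact .nil
  | fcons A _ ih => exact .fcons A ih
  | bcons _ _ ih1 ih2 => exact .bcons ih1 ih2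
  | swapff A B Γ => exact .swapff B A Γ
  | swapfb A B Γ => exact .swapbf A B Γ
  | swapbf A B Γ => exact .swapfb A B Γ
  | swapbb B C Γ => exact .swapbb C B Γ
  | trans _ _ ih1 ih2 => exact .trans ih2 ih1

theorem perm_fcons_middle (A : Formula) :
    ∀ (Δ Γ : NSeq), Perm (fcons A (Δ.append Γ)) (Δ.append (fcons A Γ))
  | nil, Γ => perm_refl _
  | fcons B Δ, Γ => .trans (.swapff A B _) (.fcons B (perm_fcons_middle A Δ Γ))
  | bcons B Δ, Γ => .trans (.swapfb A B _) (.bcons (perm_refl B) (perm_fcons_middle A Δ Γ))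

theorem perm_bcons_middle (B : NSeq) :
    ∀ (Δ Γ : NSeq), Perm (bcons B (Δ.append Γ)) (Δ.append (bcons B Γ))
  | nil, Γ => perm_refl _
  | fcons A Δ, Γ => .trans (.swapbf A B _) (.fcons A (perm_bcons_middle B Δ Γ))
  | bcons C Δ, Γ => .trans (.swapbb B C _) (.bcons (perm_refl C) (perm_bcons_middle B Δ Γ))

theorem perm_fcons_out (A : Formula) (Δ : NSeq) :
    Perm (fcons A Δ) (Δ.append (fcons A nil)) := by
  have := perm_fcons_middle A Δ nil
  rwa [append_nil] at this

theorem perm_bcons_out (B : NSeq) (Δ : NSeq) :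
    Perm (bcons B Δ) (Δ.append (bcons B nil)) := by
  have := perm_bcons_middle B Δ nil
  rwa [append_nil] at this

theorem perm_append_right (Γ : NSeq) {Δ Δ' : NSeq} (h : Perm Δ Δ') :
    Perm (Γ.append Δ) (Γ.append Δ') := by
  induction Γ with
  | nil => exact h
  | fcons A Γ ih => exact .fcons A ih
  | bcons B Γ ih1 ih2 => exact .bcons (perm_refl B) ih2

end NSeq

namespace Ctx

theorem fill_perm : ∀ (C : Ctx) {Δ Δ' : NSeq},
    NSeq.Perm Δ Δ' → NSeq.Perm (C.fill Δ) (C.fill Δ')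
  | hole, _, _, h => h
  | fcons A C, _, _, h => .fcons A (fill_perm C h)
  | scons S C, _, _, h => .bcons (NSeq.perm_refl S) (fill_perm C h)
  | binto C S, _, _, h => .bcons (fill_perm C h) (NSeq.perm_refl S)

def comp : Ctx → Ctx → Ctx
  | hole, D => D
  | fcons A C, D => fcons A (C.comp D)
  | scons S C, D => scons S (C.comp D)
  | binto C S, D => binto (C.comp D) S

theorem fill_comp : ∀ (C D : Ctx) (Δ : NSeq), (C.comp D).fill Δ = C.fill (D.fill Δ)
  | hole, _, _ => rfl
  | fcons A C, D, Δ => by rw [comp, fill, fill, fill_comp C]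
  | scons S C, D, Δ => by rw [comp, fill, fill, fill_comp C]
  | binto C S, D, Δ => by rw [comp, fill, fill, fill_comp C]

end Ctx

/-- The context `Δ, ·`: hole after the sequent `Δ`. -/
def preCtx : NSeq → Ctx
  | .nil => .hole
  | .fcons A Γ => .fcons A (preCtx Γ)
  | .bcons B Γ => .scons B (preCtx Γ)

theorem preCtx_fill : ∀ (Δ Θ : NSeq), (preCtx Δ).fill Θ = Δ.append Θ
  | .nil, _ => rfl
  | .fcons A Γ, Θ => by rw [preCtx, Ctx.fill, NSeq.append, preCtx_fill Γ]
  | .bcons B Γ, Θ => by rw [preCtx, Ctx.fill, NSeq.append, preCtx_fill Γ]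

/-- Context version of `nestBox`. -/
def ctxNest : List NSeq → Ctx
  | [] => .binto .hole .nil
  | Δ :: rest => .binto ((preCtx Δ).comp (ctxNest rest)) .nil

theorem ctxNest_fill : ∀ (Δs : List NSeq) (Θ : NSeq), (ctxNest Δs).fill Θ = nestBox Δs Θ
  | [], Θ => rfl
  | Δ :: rest, Θ => by
      rw [ctxNest, Ctx.fill, Ctx.fill_comp, preCtx_fill, ctxNest_fill rest, nestBox]

theorem nestBox_append : ∀ (xs : List NSeq) (y : NSeq) (ys : List NSeq) (Θ : NSeq),
    nestBox (xs ++ y :: ys) Θ = nestBox xs (y.append (nestBox ys Θ))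
  | [], y, ys, Θ => rfl
  | x :: xs, y, ys, Θ => by rw [List.cons_append, nestBox, nestBox_append xs, nestBox]

/-- Hereditary sub-multiset relation: `Wk Γ Θ` means `Θ` is `Γ` with extra
elements inserted (hereditarily). -/
inductive Wk : NSeq → NSeq → Prop
  | nil : Wk .nil .nil
  | fcons (A : Formula) {Γ Δ : NSeq} : Wk Γ Δ → Wk (.fcons A Γ) (.fcons A Δ)
  | bcons {B B' Γ Δ : NSeq} : Wk B B' → Wk Γ Δ → Wk (.bcons B Γ) (.bcons B' Δ)
  | skipf (A : Formula) {Γ Δ : NSeq} : Wk Γ Δ → Wk Γ (.fcons A Δ)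
  | skipb (B : NSeq) {Γ Δ : NSeq} : Wk Γ Δ → Wk Γ (.bcons B Δ)

theorem wk_refl : ∀ Γ : NSeq, Wk Γ Γ
  | .nil => .nil
  | .fcons A Γ => .fcons A (wk_refl Γ)
  | .bcons B Γ => .bcons (wk_refl B) (wk_refl Γ)

theorem wk_nil : ∀ Γ : NSeq, Wk .nil Γ
  | .nil => .nil
  | .fcons A Γ => .skipf A (wk_nil Γ)
  | .bcons B Γ => .skipb B (wk_nil Γ)

theorem wk_append {a b c d : NSeq} (h1 : Wk a b) (h2 : Wk c d) :
    Wk (a.append c) (b.append d) := by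
  induction h1 with
  | nil => exact h2
  | fcons A _ ih => exact .fcons A ih
  | bcons hB _ ihB ih => exact .bcons hB ih
  | skipf A _ ih => exact .skipf A ih
  | skipb B _ ih => exact .skipb B ih

theorem wk_append_left (Z : NSeq) {X Y : NSeq} (h : Wk X Y) : Wk X (Z.append Y) := by
  induction Z with
  | nil => exact h
  | fcons A Γ ih => exact .skipf A ih
  | bcons B Γ ih1 ih2 => exact .skipb B ih2

theorem wk_fcons_inv {Γ Θ : NSeq} (w : Wk Γ Θ) :
    ∀ F Δ, Γ = .fcons F Δ → ∃ Θ', NSeq.Perm Θ (.fcons F Θ') ∧ Wk Δ Θ' := by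
  induction w with
  | nil => intro F Δ h; exact absurd h (by simp)
  | fcons A hw ih =>
      intro F Δ h
      obtain ⟨rfl, rfl⟩ : A = F ∧ _ = Δ := by injection h with h1 h2; exact ⟨h1, h2⟩
      exact ⟨_, NSeq.perm_refl _, hw⟩
  | bcons _ _ _ _ => intro F Δ h; exact absurd h (by simp)
  | skipf A _ ih =>
      intro F Δ h
      obtain ⟨Θ', hp, hw⟩ := ih F Δ h
      exact ⟨.fcons A Θ', .trans (.fcons A hp) (.swapff A F Θ'), .skipf A hw⟩
  | skipb B _ ih =>
      intro F Δ h
      obtain ⟨Θ', hp, hw⟩ := ih F Δ h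
      exact ⟨.bcons B Θ', .trans (.bcons (NSeq.perm_refl B) hp) (.swapbf F B Θ'), .skipb B hw⟩

theorem wk_bcons_inv {Γ Θ : NSeq} (w : Wk Γ Θ) :
    ∀ B Δ, Γ = .bcons B Δ → ∃ B' Θ', NSeq.Perm Θ (.bcons B' Θ') ∧ Wk B B' ∧ Wk Δ Θ' := by
  induction w with
  | nil => intro B Δ h; exact absurd h (by simp)
  | fcons _ _ _ => intro B Δ h; exact absurd h (by simp)
  | bcons hB hw _ _ =>
      intro B Δ h
      obtain ⟨rfl, rfl⟩ : _ = B ∧ _ = Δ := by injection h with h1 h2; exact ⟨h1, h2⟩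
      exact ⟨_, _, NSeq.perm_refl _, hB, hw⟩
  | skipf A _ ih =>
      intro B Δ h
      obtain ⟨B', Θ', hp, hwB, hw⟩ := ih B Δ h
      exact ⟨B', .fcons A Θ', .trans (.fcons A hp) (.swapfb A B' Θ'), hwB, .skipf A hw⟩
  | skipb C _ ih =>
      intro B Δ h
      obtain ⟨B', Θ', hp, hwB, hw⟩ := ih B Δ h
      exact ⟨B', .bcons C Θ', .trans (.bcons (NSeq.perm_refl C) hp) (.swapbb C B' Θ'),
        hwB, .skipb C hw⟩

theorem wk_append_inv : ∀ (Γ₁ : NSeq) {Γ₂ Θ : NSeq}, Wk (Γ₁.append Γ₂) Θ →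
    ∃ B₁ B₂, NSeq.Perm Θ (B₁.append B₂) ∧ Wk Γ₁ B₁ ∧ Wk Γ₂ B₂ := by
  intro Γ₁
  induction Γ₁ with
  | nil => intro Γ₂ Θ w; exact ⟨.nil, Θ, NSeq.perm_refl _, .nil, w⟩
  | fcons A Γ₁ ih =>
      intro Γ₂ Θ w
      obtain ⟨Θ', hp, w'⟩ := wk_fcons_inv w A _ rfl
      obtain ⟨B₁, B₂, hp2, w1, w2⟩ := ih w'
      exact ⟨.fcons A B₁, B₂, .trans hp (.fcons A hp2), .fcons A w1, w2⟩
  | bcons B Γ₁ ih1 ih2 =>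
      intro Γ₂ Θ w
      obtain ⟨B', Θ', hp, wB, w'⟩ := wk_bcons_inv w B _ rfl
      obtain ⟨B₁, B₂, hp2, w1, w2⟩ := ih2 w'
      exact ⟨.bcons B' B₁, B₂, .trans hp (.bcons (NSeq.perm_refl B') hp2), .bcons wB w1, w2⟩

theorem perm_wk {Γ₀ Γ : NSeq} (hP : NSeq.Perm Γ₀ Γ) :
    ∀ {Θ : NSeq}, Wk Γ Θ → ∃ Θ₀, Wk Γ₀ Θ₀ ∧ NSeq.Perm Θ₀ Θ := by
  induction hP with
  | nil => intro Θ w; exact ⟨Θ, wk_nil Θ, NSeq.perm_refl Θ⟩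
  | fcons A hp ih =>
      intro Θ w
      obtain ⟨Θ', hpΘ, w'⟩ := wk_fcons_inv w A _ rfl
      obtain ⟨Θ₀, w0, p0⟩ := ih w'
      exact ⟨.fcons A Θ₀, .fcons A w0, .trans (.fcons A p0) hpΘ.symm⟩
  | bcons hB hΓ ihB ihΓ =>
      intro Θ w
      obtain ⟨B'', Θ', hpΘ, wB, w'⟩ := wk_bcons_inv w _ _ rfl
      obtain ⟨Θb, wb, pb⟩ := ihB wB
      obtain ⟨Θ₀, w0, p0⟩ := ihΓ w'
      exact ⟨.bcons Θb Θ₀, .bcons wb w0, .trans (.bcons pb p0) hpΘ.symm⟩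
  | swapff A B Γ =>
      intro Θ w
      obtain ⟨Θ₁, p1, w1⟩ := wk_fcons_inv w B _ rfl
      obtain ⟨Θ₂, p2, w2⟩ := wk_fcons_inv w1 A _ rfl
      exact ⟨.fcons A (.fcons B Θ₂), .fcons A (.fcons B w2),
        .trans (.swapff A B Θ₂) (.trans (.fcons B p2.symm) p1.symm)⟩
  | swapfb A B Γ =>
      intro Θ w
      obtain ⟨B', Θ₁, p1, wB, w1⟩ := wk_bcons_inv w B _ rfl
      obtain ⟨Θ₂, p2, w2⟩ := wk_fcons_inv w1 A _ rfl
      exact ⟨.fcons A (.bcons B' Θ₂), .fcons A (.bcons wB w2),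
        .trans (.swapfb A B' Θ₂) (.trans (.bcons (NSeq.perm_refl B') p2.symm) p1.symm)⟩
  | swapbf A B Γ =>
      intro Θ w
      obtain ⟨Θ₁, p1, w1⟩ := wk_fcons_inv w A _ rfl
      obtain ⟨B', Θ₂, p2, wB, w2⟩ := wk_bcons_inv w1 B _ rfl
      exact ⟨.bcons B' (.fcons A Θ₂), .bcons wB (.fcons A w2),
        .trans (.swapbf A B' Θ₂) (.trans (.fcons A p2.symm) p1.symm)⟩
  | swapbb B C Γ =>
      intro Θ w
      obtain ⟨C', Θ₁, p1, wC, w1⟩ := wk_bcons_inv w C _ rfl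
      obtain ⟨B', Θ₂, p2, wB, w2⟩ := wk_bcons_inv w1 B _ rfl
      exact ⟨.bcons B' (.bcons C' Θ₂), .bcons wB (.bcons wC w2),
        .trans (.swapbb B' C' Θ₂) (.trans (.bcons (NSeq.perm_refl C') p2.symm) p1.symm)⟩
  | trans h1 h2 ih1 ih2 =>
      intro Θ w
      obtain ⟨Θ₁, w1, p1⟩ := ih2 w
      obtain ⟨Θ₀, w0, p0⟩ := ih1 w1
      exact ⟨Θ₀, w0, .trans p0 p1⟩

theorem wk_fill_decomp {Γ Θ : NSeq} (w : Wk Γ Θ) :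
    ∀ (C : Ctx) (S : NSeq), Γ = C.fill S →
    ∃ (C' : Ctx) (S' : NSeq), Θ = C'.fill S' ∧ Wk S S' ∧
      ∀ T T', Wk T T' → Wk (C.fill T) (C'.fill T') := by
  induction w with
  | nil =>
      intro C S h
      cases C with
      | hole => exact ⟨.hole, .nil, rfl, h ▸ .nil, fun T T' w => w⟩
      | fcons A C => exact absurd h (by simp [Ctx.fill])
      | scons B C => exact absurd h (by simp [Ctx.fill])
      | binto C B => exact absurd h (by simp [Ctx.fill])
  | @fcons A Γ₀ Δ₀ hw ih =>
      intro C S h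
      cases C with
      | hole =>
          simp only [Ctx.fill] at h; subst h
          exact ⟨.hole, .fcons A Δ₀, rfl, Wk.fcons A hw, fun T T' w => w⟩
      | fcons A' C₀ =>
          rw [Ctx.fill] at h
          injection h with h1 h2
          cases h1
          obtain ⟨C', S', rfl, wS, tr⟩ := ih C₀ S h2
          exact ⟨.fcons A C', S', rfl, wS, fun T T' w => .fcons A (tr T T' w)⟩
      | scons B C => exact absurd h (by simp [Ctx.fill])
      | binto C B => exact absurd h (by simp [Ctx.fill])
  | @bcons B B' Γ₀ Δ₀ hB hw ihB ih =>
      intro C S h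
      cases C with
      | hole =>
          simp only [Ctx.fill] at h; subst h
          exact ⟨.hole, .bcons B' Δ₀, rfl, Wk.bcons hB hw, fun T T' w => w⟩
      | fcons A C => exact absurd h (by simp [Ctx.fill])
      | scons Sb C₀ =>
          rw [Ctx.fill] at h
          injection h with h1 h2
          cases h1
          obtain ⟨C', S', rfl, wS, tr⟩ := ih C₀ S h2
          exact ⟨.scons B' C', S', rfl, wS, fun T T' w => .bcons hB (tr T T' w)⟩
      | binto C₀ Ss =>
          rw [Ctx.fill] at h
          injection h with h1 h2
          cases h2
          obtain ⟨C', S', rfl, wS, tr⟩ := ihB C₀ S h1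
          exact ⟨.binto C' Δ₀, S', rfl, wS, fun T T' w => .bcons (tr T T' w) hw⟩
  | skipf A hw ih =>
      intro C S h
      obtain ⟨C', S', rfl, wS, tr⟩ := ih C S h
      exact ⟨.fcons A C', S', rfl, wS, fun T T' w => .skipf A (tr T T' w)⟩
  | skipb B hw ih =>
      intro C S h
      obtain ⟨C', S', rfl, wS, tr⟩ := ih C S h
      exact ⟨.scons B C', S', rfl, wS, fun T T' w => .skipb B (tr T T' w)⟩

theorem wk_fill_fcons : ∀ (C : Ctx) (A : Formula) (Z : NSeq),
    Wk (C.fill Z) (C.fill (.fcons A Z))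
  | .hole, A, Z => .skipf A (wk_refl Z)
  | .fcons B C, A, Z => .fcons B (wk_fill_fcons C A Z)
  | .scons S C, A, Z => .bcons (wk_refl S) (wk_fill_fcons C A Z)
  | .binto C S, A, Z => .bcons (wk_fill_fcons C A Z) (wk_refl S)

theorem wk_nestBox : ∀ (Δs : List NSeq) {Θin Θ : NSeq}, Wk (nestBox Δs Θin) Θ →
    ∃ (Δs' : List NSeq) (Θin' Θr : NSeq), Δs'.length = Δs.length ∧
      NSeq.Perm Θ (Θr.append (nestBox Δs' Θin')) ∧ Wk Θin Θin' ∧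
      ∀ T T', Wk T T' → Wk (nestBox Δs T) (nestBox Δs' T') := by
  intro Δs
  induction Δs with
  | nil =>
      intro Θin Θ w
      obtain ⟨B', Θ₂, p, wB, _⟩ := wk_bcons_inv w Θin .nil rfl
      exact ⟨[], B', Θ₂, rfl, .trans p (NSeq.perm_bcons_out B' Θ₂), wB,
        fun T T' w => .bcons w .nil⟩
  | cons Δ rest ih =>
      intro Θin Θ w
      obtain ⟨B', Θ₂, p, wB, _⟩ := wk_bcons_inv w _ .nil rfl
      obtain ⟨B₁, B₂, pB, w1, w2⟩ := wk_append_inv Δ wB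
      obtain ⟨Δs₂', Θin', Θr₂, hlen, p2, wl, Q₂⟩ := ih w2
      refine ⟨(B₁.append Θr₂) :: Δs₂', Θin', Θ₂, by simp [hlen], ?_, wl, ?_⟩
      · have hB' : NSeq.Perm B' ((B₁.append Θr₂).append (nestBox Δs₂' Θin')) := by
          rw [NSeq.append_assoc]
          exact .trans pB (NSeq.perm_append_right B₁ p2)
        exact .trans p (.trans (.bcons hB' (NSeq.perm_refl Θ₂))
          (NSeq.perm_bcons_out _ Θ₂))
      · intro T T' wT
        show Wk (.bcons (Δ.append (nestBox rest T)) .nil)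
          (.bcons ((B₁.append Θr₂).append (nestBox Δs₂' T')) .nil)
        rw [NSeq.append_assoc]
        exact .bcons (wk_append w1 (wk_append_left Θr₂ (Q₂ T T' wT))) .nil

open NSeq (perm_refl perm_fcons_middle perm_bcons_middle perm_fcons_out perm_bcons_out)

theorem wk_admissible {X4 : Set ℕ} {h : ℕ} {Γ : NSeq}
    (pf : Prf ∅ X4 cutFree h Γ) : ∀ {Θ : NSeq}, Wk Γ Θ → Prf ∅ X4 cutFree h Θ := by
  induction pf with
  | id Γc p hh =>
      intro Θ w
      obtain ⟨C', S', rfl, wS, _⟩ := wk_fill_decomp w Γc _ rfl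
      obtain ⟨Θ₁, p1, w1⟩ := wk_fcons_inv wS _ _ rfl
      obtain ⟨Θ₂, p2, _⟩ := wk_fcons_inv w1 _ _ rfl
      have base := Prf.id (Xk := ∅) (X4 := X4) (ρ := cutFree)
        (C'.comp (preCtx Θ₂)) p hh
      refine Prf.exch ?_ base
      rw [Ctx.fill_comp, preCtx_fill]
      refine Ctx.fill_perm C' ?_
      refine NSeq.Perm.symm (.trans p1 (.trans (.fcons _ p2) ?_))
      exact .trans (.fcons _ (perm_fcons_out _ Θ₂)) (perm_fcons_middle _ Θ₂ _)
  | orR Γc A B _ ih =>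
      intro Θ w
      obtain ⟨C', S', rfl, wS, tr⟩ := wk_fill_decomp w Γc _ rfl
      obtain ⟨R, pS, _⟩ := wk_fcons_inv wS _ _ rfl
      have p1 := ih (tr _ (.fcons A (.fcons B R)) (.fcons A (.fcons B (wk_nil R))))
      have p2 := Prf.exch (Δ := (C'.comp (preCtx R)).fill (.fcons A (.fcons B .nil)))
        (by rw [Ctx.fill_comp, preCtx_fill]
            exact Ctx.fill_perm C' (.trans (.fcons A (perm_fcons_out B R))
              (perm_fcons_middle A R _))) p1
      refine Prf.exch ?_ (Prf.orR _ A B p2)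
      rw [Ctx.fill_comp, preCtx_fill]
      exact Ctx.fill_perm C' (.trans (NSeq.Perm.symm (perm_fcons_out _ R)) pS.symm)
  | andR Γc A B _ _ ihA ihB =>
      intro Θ w
      obtain ⟨C', S', rfl, wS, tr⟩ := wk_fill_decomp w Γc _ rfl
      obtain ⟨R, pS, _⟩ := wk_fcons_inv wS _ _ rfl
      have p1A := ihA (tr _ (.fcons A R) (.fcons A (wk_nil R)))
      have p1B := ihB (tr _ (.fcons B R) (.fcons B (wk_nil R)))
      have p2A := Prf.exch (Δ := (C'.comp (preCtx R)).fill (.fcons A .nil))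
        (by rw [Ctx.fill_comp, preCtx_fill]
            exact Ctx.fill_perm C' (perm_fcons_out A R)) p1A
      have p2B := Prf.exch (Δ := (C'.comp (preCtx R)).fill (.fcons B .nil))
        (by rw [Ctx.fill_comp, preCtx_fill]
            exact Ctx.fill_perm C' (perm_fcons_out B R)) p1B
      refine Prf.exch ?_ (Prf.andR _ A B p2A p2B)
      rw [Ctx.fill_comp, preCtx_fill]
      exact Ctx.fill_perm C' (.trans (NSeq.Perm.symm (perm_fcons_out _ R)) pS.symm)
  | boxR Γc A _ ih =>
      intro Θ w
      obtain ⟨C', S', rfl, wS, tr⟩ := wk_fill_decomp w Γc _ rfl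
      obtain ⟨R, pS, _⟩ := wk_fcons_inv wS _ _ rfl
      have p1 := ih (tr _ (.bcons (.fcons A .nil) R)
        (.bcons (wk_refl _) (wk_nil R)))
      have p2 := Prf.exch (Δ := (C'.comp (preCtx R)).fill (.bcons (.fcons A .nil) .nil))
        (by rw [Ctx.fill_comp, preCtx_fill]
            exact Ctx.fill_perm C' (perm_bcons_out _ R)) p1
      refine Prf.exch ?_ (Prf.boxR _ A p2)
      rw [Ctx.fill_comp, preCtx_fill]
      exact Ctx.fill_perm C' (.trans (NSeq.Perm.symm (perm_fcons_out _ R)) pS.symm)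
  | diaR Γc A Δ _ ih =>
      intro Θ w
      obtain ⟨C', S', rfl, wS, tr⟩ := wk_fill_decomp w Γc _ rfl
      obtain ⟨Θ₁, pS, w1⟩ := wk_fcons_inv wS _ _ rfl
      obtain ⟨Δ', Θ₂, pb, wΔ, _⟩ := wk_bcons_inv w1 _ _ rfl
      have p1 := ih (tr _ (.fcons (.dia A) (.bcons (.fcons A Δ') Θ₂))
        (.fcons _ (.bcons (.fcons A wΔ) (wk_nil Θ₂))))
      have p2 := Prf.exch (Δ := (C'.comp (preCtx Θ₂)).fill (.fcons (.dia A) (.bcons (.fcons A Δ') .nil)))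
        (by rw [Ctx.fill_comp, preCtx_fill]
            exact Ctx.fill_perm C' (.trans (.fcons _ (perm_bcons_out _ Θ₂))
              (perm_fcons_middle _ Θ₂ _))) p1
      refine Prf.exch ?_ (Prf.diaR _ A Δ' p2)
      rw [Ctx.fill_comp, preCtx_fill]
      refine Ctx.fill_perm C' (NSeq.Perm.symm ?_)
      refine .trans pS (.trans (.fcons _ pb) ?_)
      exact .trans (.fcons _ (perm_bcons_out _ Θ₂)) (perm_fcons_middle _ Θ₂ _)
  | propk _ _ _ _ hn _ _ => exact absurd hn (Set.notMem_empty _)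
  | prop4 Γc A Δs Δl hn _ ih =>
      intro Θ w
      obtain ⟨C', S', rfl, wS, tr⟩ := wk_fill_decomp w Γc _ rfl
      obtain ⟨Θ₁, pS, w1⟩ := wk_fcons_inv wS _ _ rfl
      obtain ⟨Δs', Δl', Θr, hlen, pn, wl, Q⟩ := wk_nestBox Δs w1
      have p1 := ih (tr _ (.fcons (.dia A) (Θr.append (nestBox Δs' (.fcons (.dia A) Δl'))))
        (.fcons _ (wk_append_left Θr (Q _ _ (.fcons _ wl)))))
      have p2 := Prf.exch (Δ := (C'.comp (preCtx Θr)).fill (.fcons (.dia A) (nestBox Δs' (.fcons (.dia A) Δl'))))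
        (by rw [Ctx.fill_comp, preCtx_fill]
            exact Ctx.fill_perm C' (perm_fcons_middle _ Θr _)) p1
      have p3 := Prf.prop4 (C'.comp (preCtx Θr)) A Δs' Δl' (hlen ▸ hn) p2
      refine Prf.exch ?_ p3
      rw [Ctx.fill_comp, preCtx_fill]
      refine Ctx.fill_perm C' (NSeq.Perm.symm ?_)
      exact .trans pS (.trans (.fcons _ pn) (perm_fcons_middle _ Θr _))
  | cut _ _ hA _ _ _ _ => exact hA.elim
  | exch hP _ ih =>
      intro Θ w
      obtain ⟨Θ₀, w0, p0⟩ := perm_wk hP w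
      exact .exch p0 (ih w0)

theorem prf_mono {Xk X4 : Set ℕ} {ρ : ℕ → Prop} {h : ℕ} {Γ : NSeq}
    (pf : Prf Xk X4 ρ h Γ) : ∀ h', h ≤ h' → Prf Xk X4 ρ h' Γ := by
  induction pf with
  | id Γc p hh => intro h' _; exact .id Γc p h'
  | orR Γc A B _ ih =>
      intro h' hle
      obtain ⟨k, rfl⟩ : ∃ k, h' = k + 1 := ⟨h' - 1, by omega⟩
      exact .orR Γc A B (ih k (by omega))
  | andR Γc A B _ _ ih1 ih2 =>
      intro h' hle
      obtain ⟨k, rfl⟩ : ∃ k, h' = k + 1 := ⟨h' - 1, by omega⟩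
      exact .andR Γc A B (ih1 k (by omega)) (ih2 k (by omega))
  | boxR Γc A _ ih =>
      intro h' hle
      obtain ⟨k, rfl⟩ : ∃ k, h' = k + 1 := ⟨h' - 1, by omega⟩
      exact .boxR Γc A (ih k (by omega))
  | diaR Γc A Δ _ ih =>
      intro h' hle
      obtain ⟨k, rfl⟩ : ∃ k, h' = k + 1 := ⟨h' - 1, by omega⟩
      exact .diaR Γc A Δ (ih k (by omega))
  | propk Γc A Δs Δn hn _ ih =>
      intro h' hle
      obtain ⟨k, rfl⟩ : ∃ k, h' = k + 1 := ⟨h' - 1, by omega⟩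
      exact .propk Γc A Δs Δn hn (ih k (by omega))
  | prop4 Γc A Δs Δl hn _ ih =>
      intro h' hle
      obtain ⟨k, rfl⟩ : ∃ k, h' = k + 1 := ⟨h' - 1, by omega⟩
      exact .prop4 Γc A Δs Δl hn (ih k (by omega))
  | cut Γc A hA _ _ ih1 ih2 =>
      intro h' hle
      obtain ⟨k, rfl⟩ : ∃ k, h' = k + 1 := ⟨h' - 1, by omega⟩
      exact .cut Γc A hA (ih1 k (by omega)) (ih2 k (by omega))
  | exch hP _ ih => intro h' hle; exact .exch hP (ih h' hle)

theorem provable_exch {Xk X4 : Set ℕ} {ρ : ℕ → Prop} {Γ Δ : NSeq}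
    (hP : NSeq.Perm Γ Δ) (h : Provable Xk X4 ρ Γ) : Provable Xk X4 ρ Δ := by
  obtain ⟨n, pf⟩ := h
  exact ⟨n, .exch hP pf⟩

theorem compStep_sub {X : Set ℕ} (hX : X ⊆ {n : ℕ | 1 < n}) :
    ∀ p, compStep X p ⊆ {n : ℕ | 1 < n} := by
  intro p
  induction p with
  | zero => exact hX
  | succ p ih =>
      rintro n (hn | ⟨m, l, hm, hl, rfl⟩)
      · exact ih hn
      · have h1 := ih hm
        have h2 := ih hl
        simp only [Set.mem_setOf_eq] at *
        omega

theorem adm4 (X : Set ℕ) (hX : X ⊆ {n : ℕ | 1 < n}) : ∀ (p n : ℕ), n ∈ compStep X p →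
    ∀ (Γ : Ctx) (A : Formula) (Δs : List NSeq) (Δl : NSeq), Δs.length + 2 = n →
    Provable ∅ X cutFree (Γ.fill (.fcons (.dia A) (nestBox Δs (.fcons (.dia A) Δl)))) →
    Provable ∅ X cutFree (Γ.fill (.fcons (.dia A) (nestBox Δs Δl))) := by
  intro p
  induction p with
  | zero =>
      intro n hn Γ A Δs Δl hlen hyp
      obtain ⟨hh, pf⟩ := hyp
      exact ⟨hh + 1, .prop4 Γ A Δs Δl (hlen ▸ hn) pf⟩
  | succ p ih =>
      rintro n (hn | ⟨m, l, hm, hl, rfl⟩) Γ A Δs Δl hlen hyp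
      · exact ih n hn Γ A Δs Δl hlen hyp
      · have hm2 : 2 ≤ m := compStep_sub hX p hm
        have hl2 : 2 ≤ l := compStep_sub hX p hl
        -- split Δs = Δs₁ ++ Δm' :: Δs₂ with |Δs₁| = m-2, |Δs₂| = l-2
        have hlen1 : (Δs.take (m - 2)).length = m - 2 := by
          rw [List.length_take]; omega
        obtain ⟨Δm', Δs₂, hd⟩ : ∃ a t, Δs.drop (m - 2) = a :: t := by
          cases hdrop : Δs.drop (m - 2) with
          | nil => exfalso; have := (List.length_drop : (Δs.drop (m - 2)).length = Δs.length - (m - 2)); rw [hdrop] at this; simp at this; omega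
          | cons a t => exact ⟨a, t, rfl⟩
        have hsplit : Δs = Δs.take (m - 2) ++ Δm' :: Δs₂ := by
          rw [← hd, List.take_append_drop]
        have hlen2 : Δs₂.length + 2 = l := by
          have := congrArg List.length hsplit
          simp [hlen1] at this
          omega
        set Δs₁ := Δs.take (m - 2) with hΔs₁
        -- rewrite via nestBox_append
        rw [hsplit, nestBox_append] at hyp ⊢
        -- hyp : Provable (Γ.fill (fcons ♦A (nestBox Δs₁ (Δm'.append (nestBox Δs₂ (fcons ♦A Δl))))))
        set C₁ : Ctx := Γ.comp (.fcons (.dia A) (ctxNest Δs₁)) with hC₁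
        have fillC₁ : ∀ Z, C₁.fill Z = Γ.fill (.fcons (.dia A) (nestBox Δs₁ Z)) := by
          intro Z; rw [hC₁, Ctx.fill_comp, Ctx.fill, ctxNest_fill]
        obtain ⟨hh, pf⟩ := hyp
        rw [← fillC₁] at pf
        have pf2 := wk_admissible pf (wk_fill_fcons C₁ (.dia A) _)
        have pf3 := Prf.exch (Δ := (C₁.comp (preCtx Δm')).fill
            (.fcons (.dia A) (nestBox Δs₂ (.fcons (.dia A) Δl))))
          (by conv_rhs => rw [Ctx.fill_comp, preCtx_fill]
              exact Ctx.fill_perm C₁ (NSeq.perm_fcons_middle _ Δm' _)) pf2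
        have step1 := ih l hl (C₁.comp (preCtx Δm')) A Δs₂ Δl hlen2 ⟨hh, pf3⟩
        have step2 : Provable ∅ X cutFree
            (Γ.fill (.fcons (.dia A) (nestBox Δs₁ (.fcons (.dia A)
              (Δm'.append (nestBox Δs₂ Δl)))))) := by
          refine provable_exch ?_ step1
          conv_lhs => rw [Ctx.fill_comp, preCtx_fill]
          rw [← fillC₁]
          exact Ctx.fill_perm C₁ (NSeq.Perm.symm (NSeq.perm_fcons_middle _ Δm' _))
        have hlen1' : Δs₁.length + 2 = m := by rw [hΔs₁, hlen1]; omega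
        exact ih m hm Γ A Δs₁ (Δm'.append (nestBox Δs₂ Δl)) hlen1' step2

/-- System completion reduction: provability in `nK + ♦₄X̂` implies provability
in `nK + ♦₄X`; in particular each rule `♦₄ₙ` with `n ∈ X̂` is admissible in
`nK + ♦₄X`. -/
theorem completion_reduction (X : Set ℕ) (hX : X ⊆ {n : ℕ | 1 < n}) :
    (∀ Γ : NSeq, Provable ∅ (completion X) cutFree Γ → Provable ∅ X cutFree Γ) ∧
    (∀ n ∈ completion X, ∀ (Γ : Ctx) (A : Formula) (Δs : List NSeq) (Δl : NSeq),
      Δs.length + 2 = n →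
      Provable ∅ X cutFree
        (Γ.fill (NSeq.fcons (.dia A) (nestBox Δs (NSeq.fcons (.dia A) Δl)))) →
      Provable ∅ X cutFree (Γ.fill (NSeq.fcons (.dia A) (nestBox Δs Δl)))) := by 
  have part2 : ∀ n ∈ completion X, ∀ (Γ : Ctx) (A : Formula) (Δs : List NSeq) (Δl : NSeq),
      Δs.length + 2 = n →
      Provable ∅ X cutFree
        (Γ.fill (NSeq.fcons (.dia A) (nestBox Δs (NSeq.fcons (.dia A) Δl)))) →
      Provable ∅ X cutFree (Γ.fill (NSeq.fcons (.dia A) (nestBox Δs Δl))) := by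
    intro n hn Γ A Δs Δl hlen hyp
    obtain ⟨p, hp⟩ := Set.mem_iUnion.1 hn
    exact adm4 X hX p n hp Γ A Δs Δl hlen hyp
  refine ⟨?_, part2⟩
  rintro Γ ⟨h, pf⟩
  induction pf with
  | id Γc p hh => exact ⟨hh, .id Γc p hh⟩
  | orR Γc A B _ ih =>
      obtain ⟨h', p'⟩ := ih
      exact ⟨h' + 1, .orR Γc A B p'⟩
  | andR Γc A B _ _ ih1 ih2 =>
      obtain ⟨h1, p1⟩ := ih1
      obtain ⟨h2, p2⟩ := ih2
      exact ⟨max h1 h2 + 1, .andR Γc A B (prf_mono p1 _ (le_max_left h1 h2))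
        (prf_mono p2 _ (le_max_right h1 h2))⟩
  | boxR Γc A _ ih =>
      obtain ⟨h', p'⟩ := ih
      exact ⟨h' + 1, .boxR Γc A p'⟩
  | diaR Γc A Δ _ ih =>
      obtain ⟨h', p'⟩ := ih
      exact ⟨h' + 1, .diaR Γc A Δ p'⟩
  | propk _ _ _ _ hn _ _ => exact absurd hn (Set.notMem_empty _)
  | prop4 Γc A Δs Δl hn _ ih =>
      obtain ⟨p, hp⟩ := Set.mem_iUnion.1 hn
      exact adm4 X hX p _ hp Γc A Δs Δl rfl ih
  | cut _ _ hA _ _ _ _ => exact hA.elim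
  | exch hP _ ih => exact provable_exch hP ih
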